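/- arXiv:1708.01518 — 2 statements merged into one kernel-verified Lean document; each statement's English description precedes it below -/
import Mathlib

section
/- For the loop γ(t) in the configuration space of 6 points in ℂ given by z₁(t) = -1/(εe^{2πit}), z₂(t) = -εe^{2πit}, z₃(t) = 1, z₄(t) = -1, z₅(t) = (εe^{2πit}i - 1)/(εe^{2πit} - i), z₆(t) = -(εe^{2πit}i + 1)/(εe^{2πit} + i), with 0 < ε < 1 small, the integral over γ of the 1-form α = (1/2πi)·d(z₁-z₂)/(z₁-z₂) - (1/2πi)·d(z₃-z₄)/(z₃-z₄) equals -1. -/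
open Real

/-- For the loop γ(t) = (z₁(t),…,z₆(t)) in Conf₆(ℂ) (the six points stay pairwise
distinct), the integral over γ of α = (1/2πi)·d(z₁-z₂)/(z₁-z₂) - (1/2πi)·d(z₃-z₄)/(z₃-z₄)
equals -1. -/
theorem stmt_15 (ε : ℝ) (hε : 0 < ε) (hε1 : ε < 1)
    (z₁ z₂ z₃ z₄ z₅ z₆ : ℝ → ℂ)
    (h₁ : z₁ = fun t : ℝ => -(1 / (ε * Complex.exp (2 * π * Complex.I * (t : ℂ)))))
    (h₂ : z₂ = fun t : ℝ => -(ε * Complex.exp (2 * π * Complex.I * (t : ℂ))))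
    (h₃ : z₃ = fun _ : ℝ => 1) (h₄ : z₄ = fun _ : ℝ => -1)
    (h₅ : z₅ = fun t : ℝ => (ε * Complex.exp (2 * π * Complex.I * (t : ℂ)) * Complex.I - 1) /
        (ε * Complex.exp (2 * π * Complex.I * (t : ℂ)) - Complex.I))
    (h₆ : z₆ = fun t : ℝ => -((ε * Complex.exp (2 * π * Complex.I * (t : ℂ)) * Complex.I + 1) /
        (ε * Complex.exp (2 * π * Complex.I * (t : ℂ)) + Complex.I))) :
    (∀ t : ℝ, [z₁ t, z₂ t, z₃ t, z₄ t, z₅ t, z₆ t].Pairwise (· ≠ ·)) ∧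
    (1 / (2 * π * Complex.I)) * (∫ t in (0:ℝ)..1,
      deriv (fun s : ℝ => z₁ s - z₂ s) t / (z₁ t - z₂ t)
        - deriv (fun s : ℝ => z₃ s - z₄ s) t / (z₃ t - z₄ t)) = -1 := by
  subst h₁ h₂ h₃ h₄ h₅ h₆
  constructor
  · intro t
    beta_reduce
    set w : ℂ := (ε:ℂ) * Complex.exp (2*π*Complex.I*(t:ℂ)) with hwdef
    have habs : ‖w‖ = ε := by
      simp [hwdef, Complex.norm_exp, abs_of_nonneg hε.le]
    have hw0 : w ≠ 0 := by
      intro h; rw [h] at habs; simp at habs; linarith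
    have hw2 : w^2 ≠ 1 := by
      intro h
      have : ‖w^2‖ = 1 := by rw [h]; simp
      rw [norm_pow, habs] at this; nlinarith
    have hw1 : w ≠ 1 := by intro h; apply hw2; rw [h]; ring
    have hwm1 : w ≠ -1 := by intro h; apply hw2; rw [h]; ring
    have hwi : w - Complex.I ≠ 0 := by
      intro h
      have h2 : w = Complex.I := by linear_combination h
      rw [h2] at habs; simp at habs; linarith
    have hwmi : w + Complex.I ≠ 0 := by
      intro h
      have h2 : w = -Complex.I := by linear_combination h
      rw [h2] at habs; simp at habs; linarith
    have e12 : -(1/w) ≠ -w := by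
      intro h; apply hw2; field_simp at h; linear_combination h
    have e13 : -(1/w) ≠ 1 := by
      intro h; apply hwm1; field_simp at h; exact h.symm
    have e14 : -(1/w) ≠ -1 := by
      intro h; apply hw1; field_simp at h; linear_combination h
    have e15 : -(1/w) ≠ (w*Complex.I - 1)/(w - Complex.I) := by
      intro h; apply hw2; field_simp at h
      linear_combination Complex.I * h + (w^2-1) * Complex.I_sq
    have e16 : -(1/w) ≠ -((w*Complex.I + 1)/(w + Complex.I)) := by
      intro h; apply hw2; field_simp at h
      linear_combination -Complex.I * h + (w^2-1) * Complex.I_sq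
    have e23 : -w ≠ 1 := by
      intro h; apply hwm1; linear_combination -h
    have e24 : -w ≠ -1 := by
      intro h; apply hw1; linear_combination -h
    have e25 : -w ≠ (w*Complex.I - 1)/(w - Complex.I) := by
      intro h; apply hw2; field_simp at h; linear_combination -h
    have e26 : -w ≠ -((w*Complex.I + 1)/(w + Complex.I)) := by
      intro h; apply hw2; field_simp at h; linear_combination -h
    have e34 : (1:ℂ) ≠ -1 := by norm_num
    have e35 : (1:ℂ) ≠ (w*Complex.I - 1)/(w - Complex.I) := by
      intro h; apply hwm1; field_simp at h
      linear_combination ((1+Complex.I)/2) * h + ((w+1)/2) * Complex.I_sq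
    have e36 : (1:ℂ) ≠ -((w*Complex.I + 1)/(w + Complex.I)) := by
      intro h; apply hwm1; field_simp at h
      linear_combination ((1-Complex.I)/2) * h + ((w+1)/2) * Complex.I_sq
    have e45 : (-1:ℂ) ≠ (w*Complex.I - 1)/(w - Complex.I) := by
      intro h; apply hw1; field_simp at h
      linear_combination (-(1-Complex.I)/2) * h + ((w-1)/2) * Complex.I_sq
    have e46 : (-1:ℂ) ≠ -((w*Complex.I + 1)/(w + Complex.I)) := by
      intro h; apply hw1; field_simp at h
      linear_combination (-(1+Complex.I)/2) * h + ((w-1)/2) * Complex.I_sq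
    have e56 : (w*Complex.I - 1)/(w - Complex.I) ≠ -((w*Complex.I + 1)/(w + Complex.I)) := by
      intro h; apply hw2; field_simp at h
      linear_combination (-Complex.I/2) * h + (w^2-1) * Complex.I_sq
    refine List.Pairwise.cons ?_ (List.Pairwise.cons ?_ (List.Pairwise.cons ?_
      (List.Pairwise.cons ?_ (List.Pairwise.cons ?_ (List.Pairwise.cons
        (fun x hx => absurd hx List.not_mem_nil) List.Pairwise.nil))))) <;>
      intro x hx <;> simp only [List.mem_cons, List.mem_singleton, List.not_mem_nil, or_false] at hx
    · rcases hx with rfl|rfl|rfl|rfl|rfl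
      exacts [e12, e13, e14, e15, e16]
    · rcases hx with rfl|rfl|rfl|rfl
      exacts [e23, e24, e25, e26]
    · rcases hx with rfl|rfl|rfl
      exacts [e34, e35, e36]
    · rcases hx with rfl|rfl
      exacts [e45, e46]
    · rcases hx with rfl
      exact e56
  · beta_reduce
    set c : ℂ := 2 * π * Complex.I with hc
    set E : ℝ → ℂ := fun t => Complex.exp (c * (t : ℂ)) with hE
    have hEc : ∀ z : ℂ, HasDerivAt (fun z : ℂ => Complex.exp (c * z)) (Complex.exp (c * z) * c) z := by
      intro z
      simpa using ((hasDerivAt_id z).const_mul c).cexp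
    have habsE : ∀ t : ℝ, ‖E t‖ = 1 := by
      intro t; simp [hE, hc, Complex.norm_exp]
    have hεE : ∀ t : ℝ, (ε:ℂ) * E t ≠ 0 := by
      intro t h
      have := habsE t
      rcases mul_eq_zero.mp h with h | h
      · exact_mod_cast absurd (by exact_mod_cast h : ε = 0) hε.ne'
      · rw [h] at this; simp at this
    have habs2 : ∀ t : ℝ, ‖(ε:ℂ)^2 * (E t)^2‖ = ε^2 := by
      intro t; rw [norm_mul, norm_pow, norm_pow, habsE]; simp [abs_of_nonneg hε.le]
    have hne1 : ∀ t : ℝ, (ε:ℂ)^2 * (E t)^2 ≠ 1 := by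
      intro t h
      have := habs2 t; rw [h] at this; simp at this; nlinarith
    have hune : ∀ t : ℝ, 1 - (ε:ℂ)^2 * (E t * E t) ≠ 0 := by
      intro t h
      exact hne1 t (by linear_combination -h)
    have hVne : ∀ t : ℝ, -(1 / ((ε:ℂ) * E t)) - (-((ε:ℂ) * E t)) ≠ 0 := by
      intro t h
      apply hne1 t
      have h0 := hεE t
      field_simp at h
      linear_combination (div_eq_zero_iff.mp h).resolve_right h0
    -- the derivative of z₁ - z₂
    have hD : ∀ t : ℝ, HasDerivAt (fun s : ℝ => -(1 / ((ε:ℂ) * E s)) - (-((ε:ℂ) * E s)))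
        (((ε:ℂ) * (E t * c)) / ((ε:ℂ) * E t)^2 + (ε:ℂ) * (E t * c)) t := by
      intro t
      have h1 : HasDerivAt (fun z : ℂ => (ε:ℂ) * Complex.exp (c * z)) ((ε:ℂ) * (E t * c)) (t:ℂ) :=
        (hEc (t:ℂ)).const_mul ((ε:ℂ))
      have h2 : HasDerivAt (fun z : ℂ => ((ε:ℂ) * Complex.exp (c * z))⁻¹)
          (-((ε:ℂ) * (E t * c)) / ((ε:ℂ) * E t)^2) (t:ℂ) := h1.inv (hεE t)
      have h3 := ((h2.neg).sub (h1.neg)).comp_ofReal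
      have h4 : HasDerivAt (fun s : ℝ => -(1 / ((ε:ℂ) * E s)) - (-((ε:ℂ) * E s)))
          (-(-((ε:ℂ) * (E t * c)) / ((ε:ℂ) * E t)^2) - -((ε:ℂ) * (E t * c))) t := by
        simpa [one_div, hE] using h3
      convert h4 using 1
      ring
    -- the antiderivative
    set g : ℝ → ℂ := fun t => -c * t + Complex.log (1 - (ε:ℂ)^2 * (E t * E t)) with hg
    have hgderiv : ∀ t : ℝ, HasDerivAt g
        ((((ε:ℂ) * (E t * c)) / ((ε:ℂ) * E t)^2 + (ε:ℂ) * (E t * c))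
          / (-(1 / ((ε:ℂ) * E t)) - (-((ε:ℂ) * E t))) - 0 / ((1:ℂ) - (-1))) t := by
      intro t
      have h1 : HasDerivAt (fun s : ℝ => -c * (s:ℂ)) (-c) t := by
        simpa using ((hasDerivAt_id (t:ℂ)).const_mul (-c)).comp_ofReal
      have hu : HasDerivAt (fun z : ℂ => 1 - (ε:ℂ)^2 * (Complex.exp (c*z) * Complex.exp (c*z)))
          (-((ε:ℂ)^2 * (E t * c * E t + E t * (E t * c)))) (t:ℂ) :=
        (((hEc (t:ℂ)).mul (hEc (t:ℂ))).const_mul ((ε:ℂ)^2)).const_sub 1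
      have hmem : 1 - (ε:ℂ)^2 * (E t * E t) ∈ Complex.slitPlane := by
        apply Or.inl
        have h1 : ((1:ℂ) - (ε:ℂ)^2 * (E t * E t)).re = 1 - ε^2 * ((E t * E t)).re := by
          simp [Complex.sub_re, Complex.mul_re, ← Complex.ofReal_pow]
        rw [h1]
        have h2 : ((E t * E t)).re ≤ 1 := by
          calc ((E t * E t)).re ≤ ‖E t * E t‖ := Complex.re_le_norm _
          _ = 1 := by rw [norm_mul, habsE]; norm_num
        nlinarith [sq_nonneg ε]
      have hlog := ((Complex.hasDerivAt_log hmem).comp (t:ℂ) hu).comp_ofReal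
      have hsum := h1.add hlog
      refine hsum.congr_deriv (Eq.symm ?_)
      have hne := hune t
      have hε0 : (ε:ℂ) ≠ 0 := by exact_mod_cast hε.ne'
      have hE0 : E t ≠ 0 := Complex.exp_ne_zero _
      have hq : (ε:ℂ)^2 * (E t)^2 - 1 ≠ 0 := sub_ne_zero.mpr (hne1 t)
      have hq' : 1 - (ε:ℂ)^2 * (E t * E t) ≠ 0 := hne
      rw [div_sub_div _ _ (hVne t) (by norm_num : ((1:ℂ) - (-1)) ≠ 0)]
      rw [div_eq_iff (mul_ne_zero (hVne t) (by norm_num))]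
      field_simp
      ring_nf
      have hq2 : 1 - (ε:ℂ)^2 * E t^2 ≠ 0 := by rwa [sq (E t)]
      field_simp
      ring
    -- continuity of the explicit integrand
    have hEcont : Continuous E := Complex.continuous_exp.comp (continuous_const.mul Complex.continuous_ofReal)
    have hcont : Continuous (fun t : ℝ => (((ε:ℂ) * (E t * c)) / ((ε:ℂ) * E t)^2 + (ε:ℂ) * (E t * c))
        / (-(1 / ((ε:ℂ) * E t)) - (-((ε:ℂ) * E t))) - 0 / ((1:ℂ) - (-1))) := by
      apply Continuous.sub ?_ continuous_const
      apply Continuous.div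
      · exact ((continuous_const.mul (hEcont.mul continuous_const)).div
          ((continuous_const.mul hEcont).pow 2) (fun t => pow_ne_zero 2 (hεE t))).add
          (continuous_const.mul (hEcont.mul continuous_const))
      · exact ((continuous_const.div (continuous_const.mul hEcont) hεE).neg).sub
          ((continuous_const.mul hEcont).neg)
      · exact hVne
    have key := intervalIntegral.integral_eq_sub_of_hasDerivAt (a := (0:ℝ)) (b := 1)
      (f := g) (fun t _ => hgderiv t) (hcont.intervalIntegrable 0 1)
    have hcongr : (∫ t in (0:ℝ)..1,
        deriv (fun s : ℝ => -(1 / ((ε:ℂ) * E s)) - (-((ε:ℂ) * E s))) t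
          / (-(1 / ((ε:ℂ) * E t)) - (-((ε:ℂ) * E t)))
          - deriv (fun _ : ℝ => (1:ℂ) - (-1)) t / ((1:ℂ) - (-1)))
        = ∫ t in (0:ℝ)..1, (((ε:ℂ) * (E t * c)) / ((ε:ℂ) * E t)^2 + (ε:ℂ) * (E t * c))
        / (-(1 / ((ε:ℂ) * E t)) - (-((ε:ℂ) * E t))) - 0 / ((1:ℂ) - (-1)) := by
      apply intervalIntegral.integral_congr
      intro t _
      dsimp only
      rw [(hD t).deriv, deriv_const]
    rw [hcongr, key]
    have hE1 : E 1 = 1 := by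
      rw [hE]; push_cast
      rw [mul_one, hc, Complex.exp_two_pi_mul_I]
    have hE0' : E 0 = 1 := by rw [hE]; push_cast; simp
    rw [hg]
    simp only [hE1, hE0']
    push_cast
    have : -c * 1 + Complex.log (1 - ↑ε ^ 2 * (1*1)) - (-c * 0 + Complex.log (1 - ↑ε ^ 2 * (1*1))) = -c := by
      ring
    rw [this, hc]
    have hpi : (π:ℂ) ≠ 0 := by exact_mod_cast Real.pi_ne_zero
    field_simp
end

section
/- Consequently, the homology class in H₁(Conf₆(ℂ);ℝ) of the loop γ from the previous statement is nonzero and is not a real multiple of the class of δ²: indeed there exists a closed 1-form (namely α) vanishing on δ² but taking value -1 on γ. -/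
/-- If a linear functional (the period of the closed 1-form α) on H₁(Conf₆(ℂ);ℝ)
takes the value -1 on the class of γ and 0 on the class of δ², then the class of γ
is nonzero and is not a real multiple of the class of δ². -/
theorem stmt_17 (V : Type) [AddCommGroup V] [Module ℝ V]
    (γ δsq : V) (φ : V →ₗ[ℝ] ℝ) (hγ : φ γ = -1) (hδ : φ δsq = 0) :
    γ ≠ 0 ∧ ∀ r : ℝ, γ ≠ r • δsq := by
  constructor
  · intro h; rw [h, map_zero] at hγ; norm_num at hγ
  · intro r h
    rw [h, map_smul, hδ, smul_zero] at hγ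
    norm_num at hγ
end
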